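/- arXiv:2204.08635 — 3 statements merged into one kernel-verified Lean document; each statement's English description precedes it below -/
import Mathlib

section
/- Let n ≥ 1, α ∈ (0,∞), t ∈ (0,∞), p ∈ (0,∞), r ∈ (1,∞) and q ∈ [1,∞]. Then there is a constant C ≥ 1, independent of f, such that for every measurable function f : ℝⁿ → ℂ, C^{-1}(‖f‖_{(K̇E^{α,p}_{q,r})_t} + ‖f‖_{(E_r^q)_t}) ≤ ‖f‖_{(KE^{α,p}_{q,r})_t} ≤ C(‖f‖_{(K̇E^{α,p}_{q,r})_t} + ‖f‖_{(E_r^q)_t}). In particular (KE^{α,p}_{q,r})_t(ℝⁿ) = (K̇E^{α,p}_{q,r})_t(ℝⁿ) ∩ (E_r^q)_t(ℝⁿ). -/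
open MeasureTheory Metric Set ENNReal
open scoped NNReal

noncomputable section

abbrev En (n : ℕ) : Type := EuclideanSpace ℝ (Fin n)

/-- Slice norm `‖f‖_{(E_r^q)_t}` for `ℝ≥0∞`-valued functions. -/
def sliceNorm (n : ℕ) (t r : ℝ) (q : ℝ≥0∞) (g : En n → ℝ≥0∞) : ℝ≥0∞ :=
  if q = ∞ then
    essSup (fun x => ((volume (ball x t))⁻¹ * ∫⁻ y in ball x t, g y ^ r) ^ (1 / r)) volume
  else
    (∫⁻ x, (((volume (ball x t))⁻¹ * ∫⁻ y in ball x t, g y ^ r) ^ (1 / r)) ^ q.toReal) ^ (1 / q.toReal)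

/-- Slice norm of a complex-valued function. -/
def sliceNormC (n : ℕ) (t r : ℝ) (q : ℝ≥0∞) (f : En n → ℂ) : ℝ≥0∞ :=
  sliceNorm n t r q fun y => (‖f y‖₊ : ℝ≥0∞)

/-- The ball `B_k = {x : |x| ≤ 2^k}`. -/
def ballZ (n : ℕ) (k : ℤ) : Set (En n) := closedBall 0 ((2 : ℝ) ^ k)

/-- The shell `S_k = B_k \ B_{k-1}`. -/
def shell (n : ℕ) (k : ℤ) : Set (En n) := ballZ n k \ ballZ n (k - 1)

/-- Homogeneous Herz-slice norm of an `ℝ≥0∞`-valued function. -/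
def herzHom (n : ℕ) (t r : ℝ) (q : ℝ≥0∞) (α : ℝ) (p : ℝ≥0∞) (g : En n → ℝ≥0∞) : ℝ≥0∞ :=
  if p = ∞ then
    ⨆ k : ℤ, (2 : ℝ≥0∞) ^ ((k : ℝ) * α) * sliceNorm n t r q ((shell n k).indicator g)
  else
    (∑' k : ℤ, ((2 : ℝ≥0∞) ^ ((k : ℝ) * α) * sliceNorm n t r q ((shell n k).indicator g)) ^ p.toReal) ^ (1 / p.toReal)

/-- Homogeneous Herz-slice norm of a complex-valued function. -/
def herzHomC (n : ℕ) (t r : ℝ) (q : ℝ≥0∞) (α : ℝ) (p : ℝ≥0∞) (f : En n → ℂ) : ℝ≥0∞ :=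
  herzHom n t r q α p fun y => (‖f y‖₊ : ℝ≥0∞)

/-- The `k`-th piece in the non-homogeneous decomposition: `B_0` for `k = 0`, `S_k` for `k ≥ 1`. -/
def pieceN (n : ℕ) (k : ℕ) : Set (En n) := if k = 0 then ballZ n 0 else shell n k

/-- Non-homogeneous Herz-slice norm of an `ℝ≥0∞`-valued function. -/
def herzNonHom (n : ℕ) (t r : ℝ) (q : ℝ≥0∞) (α : ℝ) (p : ℝ≥0∞) (g : En n → ℝ≥0∞) : ℝ≥0∞ :=
  if p = ∞ then
    ⨆ k : ℕ, (2 : ℝ≥0∞) ^ ((k : ℝ) * α) * sliceNorm n t r q ((pieceN n k).indicator g)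
  else
    (∑' k : ℕ, ((2 : ℝ≥0∞) ^ ((k : ℝ) * α) * sliceNorm n t r q ((pieceN n k).indicator g)) ^ p.toReal) ^ (1 / p.toReal)

/-- Non-homogeneous Herz-slice norm of a complex-valued function. -/
def herzNonHomC (n : ℕ) (t r : ℝ) (q : ℝ≥0∞) (α : ℝ) (p : ℝ≥0∞) (f : En n → ℂ) : ℝ≥0∞ :=
  herzNonHom n t r q α p fun y => (‖f y‖₊ : ℝ≥0∞)

/-- Hardy–Littlewood maximal operator. -/
def maximal (n : ℕ) (f : En n → ℂ) (x : En n) : ℝ≥0∞ :=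
  ⨆ (ρ : ℝ) (_ : 0 < ρ), (volume (ball x ρ))⁻¹ * ∫⁻ y in ball x ρ, (‖f y‖₊ : ℝ≥0∞)

noncomputable section

lemma myRpow_iSup (s : ℝ) (hs : 0 < s) {ι : Sort*} (f : ι → ℝ≥0∞) :
    (⨆ i, f i) ^ s = ⨆ i, (f i) ^ s := by
  have h := (ENNReal.orderIsoRpow s hs).map_iSup f
  have h2 : ∀ x : ℝ≥0∞, ENNReal.orderIsoRpow s hs x = x ^ s := fun x => rfl
  rw [h2] at h
  rw [h]; simp only [h2]

lemma myTsum_rpow_le {ι : Type*} (f : ι → ℝ≥0∞) {s : ℝ} (hs : 0 < s) (hs1 : s ≤ 1) :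
    (∑' i, f i) ^ s ≤ ∑' i, (f i) ^ s := by
  classical
  rw [ENNReal.tsum_eq_iSup_sum, myRpow_iSup s hs]
  refine iSup_le fun F => ?_
  refine le_trans ?_ (ENNReal.sum_le_tsum F)
  induction F using Finset.induction_on with
  | empty => simp [ENNReal.zero_rpow_of_pos hs]
  | @insert a F ha ih =>
    rw [Finset.sum_insert ha, Finset.sum_insert ha]
    exact le_trans (ENNReal.rpow_add_le_add_rpow _ _ hs.le hs1) (add_le_add le_rfl ih)

lemma myLintegral_Lp_tsum_le {X : Type*} [MeasurableSpace X] {μ : Measure X}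
    (G : ℕ → X → ℝ≥0∞) (hG : ∀ k, Measurable (G k)) {Q : ℝ} (hQ : 1 ≤ Q) :
    (∫⁻ x, (∑' k, G k x) ^ Q ∂μ) ^ (1/Q) ≤ ∑' k, (∫⁻ x, (G k x) ^ Q ∂μ) ^ (1/Q) := by
  have hQ0 : (0:ℝ) < Q := lt_of_lt_of_le one_pos hQ
  have hmeasS : ∀ N : ℕ, Measurable fun x => ∑ k ∈ Finset.range N, G k x := by
    intro N; exact Finset.measurable_sum _ fun k _ => hG k
  have hfin : ∀ N : ℕ, (∫⁻ x, (∑ k ∈ Finset.range N, G k x) ^ Q ∂μ) ^ (1/Q)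
      ≤ ∑ k ∈ Finset.range N, (∫⁻ x, (G k x) ^ Q ∂μ) ^ (1/Q) := by
    intro N
    induction N with
    | zero =>
      simp only [Finset.range_zero, Finset.sum_empty, Finset.sum_empty]
      rw [ENNReal.zero_rpow_of_pos hQ0, lintegral_zero, ENNReal.zero_rpow_of_pos (by positivity)]
    | succ N ih =>
      simp only [Finset.sum_range_succ]
      refine le_trans (ENNReal.lintegral_Lp_add_le (hmeasS N).aemeasurable
        (hG N).aemeasurable hQ) ?_
      exact add_le_add ih le_rfl
  have hpt : ∀ x, (∑' k, G k x) = ⨆ N, ∑ k ∈ Finset.range N, G k x := fun x =>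
    ENNReal.tsum_eq_iSup_nat
  calc (∫⁻ x, (∑' k, G k x) ^ Q ∂μ) ^ (1/Q)
      = (∫⁻ x, ⨆ N, (∑ k ∈ Finset.range N, G k x) ^ Q ∂μ) ^ (1/Q) := by
        simp_rw [hpt]
        congr 1
        refine lintegral_congr fun x => ?_
        exact myRpow_iSup Q hQ0 _
    _ = (⨆ N, ∫⁻ x, (∑ k ∈ Finset.range N, G k x) ^ Q ∂μ) ^ (1/Q) := by
        rw [lintegral_iSup (fun N => (hmeasS N).pow_const Q) ?_]
        intro i j hij
        intro x
        exact ENNReal.rpow_le_rpow (Finset.sum_le_sum_of_subset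
          (Finset.range_subset_range.2 hij)) hQ0.le
    _ = ⨆ N, (∫⁻ x, (∑ k ∈ Finset.range N, G k x) ^ Q ∂μ) ^ (1/Q) :=
        myRpow_iSup _ (by positivity) _
    _ ≤ ∑' k, (∫⁻ x, (G k x) ^ Q ∂μ) ^ (1/Q) :=
        iSup_le fun N => le_trans (hfin N) (ENNReal.sum_le_tsum _)

lemma myEssSup_tsum_le {X : Type*} [MeasurableSpace X] {μ : Measure X}
    (G : ℕ → X → ℝ≥0∞) :
    essSup (fun x => ∑' k, G k x) μ ≤ ∑' k, essSup (G k) μ := by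
  have h : ∀ᵐ x ∂μ, ∀ k, G k x ≤ essSup (G k) μ :=
    (ae_all_iff).2 fun k => ae_le_essSup (G k)
  exact essSup_le_of_ae_le _ (h.mono fun x hx => ENNReal.tsum_le_tsum hx)

lemma myMeasurable_lint_ball {n : ℕ} (t : ℝ) {G : En n → ℝ≥0∞} (hG : Measurable G) :
    Measurable fun x : En n => ∫⁻ y in ball x t, G y := by
  have h1 : ∀ x : En n, ∫⁻ y in ball x t, G y = ∫⁻ y, (ball x t).indicator G y := fun x =>
    (lintegral_indicator measurableSet_ball G).symm
  simp_rw [h1]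
  have hset : MeasurableSet {p : En n × En n | dist p.2 p.1 < t} :=
    (isOpen_lt (continuous_snd.dist continuous_fst) continuous_const).measurableSet
  have h2 : Measurable fun p : En n × En n => (ball p.1 t).indicator G p.2 := by
    have heq : (fun p : En n × En n => (ball p.1 t).indicator G p.2) =
        fun p : En n × En n => if dist p.2 p.1 < t then G p.2 else 0 := by
      funext p
      classical
      rw [Set.indicator_apply]
      congr 1
    rw [heq]
    exact Measurable.ite hset (hG.comp measurable_snd) measurable_const
  exact h2.lintegral_prod_right'

lemma mem_ballZ_iff {n : ℕ} {k : ℤ} {y : En n} : y ∈ ballZ n k ↔ ‖y‖ ≤ (2:ℝ)^k :=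
  mem_closedBall_zero_iff

lemma mem_shell_iff {n : ℕ} {k : ℤ} {y : En n} :
    y ∈ shell n k ↔ ‖y‖ ≤ (2:ℝ)^k ∧ ¬ ‖y‖ ≤ (2:ℝ)^(k-1) := by
  unfold shell
  rw [Set.mem_diff, mem_ballZ_iff, mem_ballZ_iff]

lemma shell_eq_of_mem {n : ℕ} {j k : ℤ} {y : En n} (hj : y ∈ shell n j) (hk : y ∈ shell n k) :
    j = k := by
  rw [mem_shell_iff] at hj hk
  by_contra hne
  rcases lt_or_gt_of_ne hne with h | h
  · exact hk.2 (le_trans hj.1 (zpow_le_zpow_right₀ one_le_two (by omega)))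
  · exact hj.2 (le_trans hk.1 (zpow_le_zpow_right₀ one_le_two (by omega)))

lemma shell_subset_ballZ_zero {n : ℕ} {k : ℤ} (hk : k ≤ 0) : shell n k ⊆ ballZ n 0 := by
  intro y hy
  rw [mem_ballZ_iff, zpow_zero]
  rw [mem_shell_iff] at hy
  exact le_trans hy.1 (by
    have := zpow_le_zpow_right₀ (one_le_two (α := ℝ)) hk
    simpa using this)

lemma exists_pieceN {n : ℕ} (y : En n) :
    ∃ k : ℕ, y ∈ pieceN n k ∧ ∀ j : ℕ, j ≠ k → y ∉ pieceN n j := by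
  by_cases h1 : ‖y‖ ≤ 1
  · refine ⟨0, ?_, ?_⟩
    · rw [pieceN, if_pos rfl, mem_ballZ_iff, zpow_zero]
      exact h1
    · intro j hj hmem
      rw [pieceN, if_neg hj, mem_shell_iff] at hmem
      refine hmem.2 (le_trans h1 ?_)
      have : ((2:ℝ))^(0:ℤ) ≤ (2:ℝ)^((j:ℤ)-1) :=
        zpow_le_zpow_right₀ one_le_two (by omega)
      simpa using this
  · push_neg at h1
    have hy0 : (0:ℝ) < ‖y‖ := lt_trans one_pos h1
    set L := Real.logb 2 ‖y‖ with hLdef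
    have hLpos : 0 < L := Real.logb_pos one_lt_two h1
    set c : ℤ := ⌈L⌉ with hcdef
    have hc1 : 1 ≤ c := Int.ceil_pos.mpr hLpos
    have hck : ((c.toNat : ℕ) : ℤ) = c := Int.toNat_of_nonneg (by omega)
    have hrw : ‖y‖ = (2:ℝ) ^ L := (Real.rpow_logb two_pos (by norm_num) hy0).symm
    have hmem : y ∈ shell n c := by
      rw [mem_shell_iff]
      constructor
      · rw [hrw, ← Real.rpow_intCast 2 c]
        exact Real.rpow_le_rpow_of_exponent_le one_le_two (Int.le_ceil L)
      · rw [hrw, ← Real.rpow_intCast 2 (c-1)]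
        intro hle
        have h3 : L ≤ ((c - 1 : ℤ) : ℝ) :=
          (Real.rpow_le_rpow_left_iff one_lt_two).1 hle
        have h2 : (c:ℝ) < L + 1 := Int.ceil_lt_add_one L
        push_cast at h3
        linarith
    have hk0 : c.toNat ≠ 0 := by omega
    refine ⟨c.toNat, ?_, ?_⟩
    · rw [pieceN, if_neg hk0, hck]
      exact hmem
    · intro j hj hjm
      by_cases hj0 : j = 0
      · subst hj0
        rw [pieceN, if_pos rfl, mem_ballZ_iff, zpow_zero] at hjm
        exact absurd hjm (not_le.2 h1)
      · rw [pieceN, if_neg hj0] at hjm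
        have := shell_eq_of_mem hjm hmem
        apply hj
        omega

lemma sliceNorm_mono {n : ℕ} {t r : ℝ} (hr : 0 < r) (q : ℝ≥0∞) {g h : En n → ℝ≥0∞}
    (hgh : ∀ y, g y ≤ h y) : sliceNorm n t r q g ≤ sliceNorm n t r q h := by
  have key : ∀ x : En n, ((volume (ball x t))⁻¹ * ∫⁻ y in ball x t, g y ^ r) ^ (1/r)
      ≤ ((volume (ball x t))⁻¹ * ∫⁻ y in ball x t, h y ^ r) ^ (1/r) := by
    intro x
    refine ENNReal.rpow_le_rpow ?_ (by positivity)
    refine mul_le_mul_right ?_ _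
    exact lintegral_mono fun y => ENNReal.rpow_le_rpow (hgh y) hr.le
  unfold sliceNorm
  split
  · exact essSup_mono_ae (Filter.Eventually.of_forall key)
  · refine ENNReal.rpow_le_rpow ?_ (by positivity)
    exact lintegral_mono fun x => ENNReal.rpow_le_rpow (key x) ENNReal.toReal_nonneg

lemma measurableSet_pieceN {n : ℕ} (k : ℕ) : MeasurableSet (pieceN n k) := by
  rw [pieceN]
  split
  · exact measurableSet_closedBall
  · exact measurableSet_closedBall.diff measurableSet_closedBall

lemma sliceNorm_tsum_pieces {n : ℕ} {t r : ℝ} (hr : 1 < r) {q : ℝ≥0∞} (hq : 1 ≤ q)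
    {g : En n → ℝ≥0∞} (hg : Measurable g) :
    sliceNorm n t r q g ≤ ∑' k : ℕ, sliceNorm n t r q ((pieceN n k).indicator g) := by
  have hr0 : (0:ℝ) < r := lt_trans one_pos hr
  set G : ℕ → En n → ℝ≥0∞ := fun k x =>
    ((volume (ball x t))⁻¹ * ∫⁻ y in ball x t, ((pieceN n k).indicator g y) ^ r) ^ (1/r)
    with hGdef
  have hindmeas : ∀ k : ℕ, Measurable ((pieceN n k).indicator g) := fun k =>
    hg.indicator (measurableSet_pieceN k)
  have hvol : Measurable fun x : En n => (volume (ball x t))⁻¹ := by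
    have h1 : Measurable fun x : En n => ∫⁻ y in ball x t, (1:ℝ≥0∞) :=
      myMeasurable_lint_ball t measurable_const
    have h2 : (fun x : En n => volume (ball x t)) = fun x => ∫⁻ y in ball x t, (1:ℝ≥0∞) := by
      funext x; rw [setLIntegral_one]
    exact (h2 ▸ h1).inv
  have hGmeas : ∀ k : ℕ, Measurable (G k) := by
    intro k
    exact (hvol.mul (myMeasurable_lint_ball t ((hindmeas k).pow_const r))).pow_const (1/r)
  have hpoint : ∀ x : En n,
      ((volume (ball x t))⁻¹ * ∫⁻ y in ball x t, g y ^ r) ^ (1/r) ≤ ∑' k, G k x := by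
    intro x
    have hsum : ∀ y : En n, g y ^ r = ∑' k : ℕ, ((pieceN n k).indicator g y) ^ r := by
      intro y
      obtain ⟨k, hk, huniq⟩ := exists_pieceN y
      rw [tsum_eq_single k]
      · rw [Set.indicator_of_mem hk]
      · intro j hj
        rw [Set.indicator_of_notMem (huniq j hj), ENNReal.zero_rpow_of_pos hr0]
    have hint : ∫⁻ y in ball x t, g y ^ r
        = ∑' k : ℕ, ∫⁻ y in ball x t, ((pieceN n k).indicator g y) ^ r := by
      simp_rw [hsum]
      exact lintegral_tsum fun k => ((hindmeas k).pow_const r).aemeasurable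
    rw [hint, ENNReal.tsum_mul_left.symm]
    exact myTsum_rpow_le _ (by positivity) (by
      rw [div_le_one hr0]; exact hr.le)
  by_cases hqtop : q = ∞
  · subst hqtop
    unfold sliceNorm
    simp only [if_pos rfl]
    refine le_trans (essSup_mono_ae (Filter.Eventually.of_forall hpoint)) ?_
    exact myEssSup_tsum_le G
  · have hQ : 1 ≤ q.toReal := by
      have := ENNReal.toReal_mono hqtop hq
      simpa using this
    unfold sliceNorm
    simp only [if_neg hqtop]
    refine le_trans ?_ (myLintegral_Lp_tsum_le G hGmeas hQ)
    refine ENNReal.rpow_le_rpow ?_ (by positivity)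
    exact lintegral_mono fun x => ENNReal.rpow_le_rpow (hpoint x) ENNReal.toReal_nonneg

lemma two_rpow_ne_zero (y : ℝ) : (2:ℝ≥0∞) ^ y ≠ 0 :=
  (ENNReal.rpow_pos (by norm_num) (by norm_num)).ne'

lemma two_rpow_ne_top (y : ℝ) : (2:ℝ≥0∞) ^ y ≠ ∞ := by
  rw [Ne, ENNReal.rpow_eq_top_iff]
  push_neg
  constructor
  · intro h; norm_num at h
  · intro h; norm_num at h

/-- the non-homogeneous Herz-slice space is the intersection of the homogeneous
Herz-slice space and the slice space, with equivalent norms. -/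
theorem nonHomHerzSlice_eq_homHerzSlice_inter_slice
    (n : ℕ) (hn : 1 ≤ n) (α t r : ℝ) (hα : 0 < α) (ht : 0 < t) (hr : 1 < r)
    (p : ℝ≥0∞) (hp : 0 < p) (hp' : p ≠ ∞) (q : ℝ≥0∞) (hq : 1 ≤ q) :
    ∃ C : ℝ≥0, 1 ≤ C ∧ ∀ f : En n → ℂ, Measurable f →
      (C : ℝ≥0∞)⁻¹ * (herzHomC n t r q α p f + sliceNormC n t r q f)
          ≤ herzNonHomC n t r q α p f ∧
      herzNonHomC n t r q α p f
          ≤ (C : ℝ≥0∞) * (herzHomC n t r q α p f + sliceNormC n t r q f) := by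
  classical
  have hr0 : (0:ℝ) < r := lt_trans one_pos hr
  have hP : 0 < p.toReal := ENNReal.toReal_pos hp.ne' hp'
  set P := p.toReal with hPdef
  set x₁ : ℝ≥0∞ := (2:ℝ≥0∞) ^ (-(α*P)) with hx1
  set x₂ : ℝ≥0∞ := (2:ℝ≥0∞) ^ (-α) with hx2
  have hlt : ∀ β : ℝ, 0 < β → (2:ℝ≥0∞)^(-β) < 1 := by
    intro β hb
    rw [ENNReal.rpow_neg]
    exact ENNReal.inv_lt_one.2 (ENNReal.one_lt_rpow one_lt_two hb)
  have hx1lt : x₁ < 1 := hlt _ (by positivity)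
  have hx2lt : x₂ < 1 := hlt _ hα
  set c₁ : ℝ≥0∞ := (1 - x₁)⁻¹ with hc1
  set c₂ : ℝ≥0∞ := (1 - x₂)⁻¹ with hc2
  have hfininv : ∀ x : ℝ≥0∞, x < 1 → (1 - x)⁻¹ ≠ ∞ := by
    intro x hx
    rw [Ne, ENNReal.inv_eq_top]
    intro h
    rw [tsub_eq_zero_iff_le] at h
    exact absurd h (not_le.2 hx)
  set cH : ℝ≥0∞ := (c₁ + 1) ^ (1/P) with hcH
  set cU : ℝ≥0∞ := (2:ℝ≥0∞) ^ (1/P) with hcU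
  have hcHtop : cH ≠ ∞ :=
    ENNReal.rpow_ne_top_of_nonneg (by positivity)
      (ENNReal.add_ne_top.2 ⟨hfininv _ hx1lt, ENNReal.one_ne_top⟩)
  have hcUtop : cU ≠ ∞ := ENNReal.rpow_ne_top_of_nonneg (by positivity) (by norm_num)
  set D : ℝ≥0∞ := cH + c₂ with hD
  have hDtop : D ≠ ∞ := ENNReal.add_ne_top.2 ⟨hcHtop, hfininv _ hx2lt⟩
  refine ⟨1 + D.toNNReal + cU.toNNReal, le_trans le_self_add le_self_add, ?_⟩
  set C : ℝ≥0 := 1 + D.toNNReal + cU.toNNReal with hCdef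
  have hCcoe : (C : ℝ≥0∞) = 1 + D.toNNReal + cU.toNNReal := by push_cast; rfl
  have hDleC : D ≤ (C : ℝ≥0∞) := by
    rw [hCcoe]
    calc D = ((D.toNNReal : ℝ≥0∞)) := (ENNReal.coe_toNNReal hDtop).symm
      _ ≤ 1 + D.toNNReal := le_add_self
      _ ≤ 1 + D.toNNReal + cU.toNNReal := le_self_add
  have hcUleC : cU ≤ (C : ℝ≥0∞) := by
    rw [hCcoe]
    calc cU = ((cU.toNNReal : ℝ≥0∞)) := (ENNReal.coe_toNNReal hcUtop).symm
      _ ≤ 1 + D.toNNReal + cU.toNNReal := le_add_self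
  have hCne0 : (C : ℝ≥0∞) ≠ 0 := by
    rw [hCcoe]
    simp
  intro f hf
  set g : En n → ℝ≥0∞ := fun y => (‖f y‖₊ : ℝ≥0∞) with hg
  have hgmeas : Measurable g := hf.nnnorm.coe_nnreal_ennreal
  set T : ℕ → ℝ≥0∞ := fun k =>
    (2:ℝ≥0∞) ^ ((k:ℝ) * α) * sliceNorm n t r q ((pieceN n k).indicator g) with hT
  set U : ℤ → ℝ≥0∞ := fun k =>
    (2:ℝ≥0∞) ^ ((k:ℝ) * α) * sliceNorm n t r q ((shell n k).indicator g) with hU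
  set S : ℝ≥0∞ := sliceNorm n t r q g with hS
  set Nf : ℝ≥0∞ := herzNonHom n t r q α p g with hNf
  set Hf : ℝ≥0∞ := herzHom n t r q α p g with hHf
  have hNC : herzNonHomC n t r q α p f = Nf := rfl
  have hHC : herzHomC n t r q α p f = Hf := rfl
  have hSC : sliceNormC n t r q f = S := rfl
  have hNeq : Nf = (∑' k : ℕ, T k ^ P) ^ (1/P) := by
    rw [hNf, herzNonHom, if_neg hp']
  have hHeq : Hf = (∑' k : ℤ, U k ^ P) ^ (1/P) := by
    rw [hHf, herzHom, if_neg hp']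
  have hNP : Nf ^ P = ∑' k : ℕ, T k ^ P := by
    rw [hNeq, ← ENNReal.rpow_mul, one_div, inv_mul_cancel₀ hP.ne', ENNReal.rpow_one]
  have hHP : Hf ^ P = ∑' k : ℤ, U k ^ P := by
    rw [hHeq, ← ENNReal.rpow_mul, one_div, inv_mul_cancel₀ hP.ne', ENNReal.rpow_one]
  have hTle : ∀ k : ℕ, T k ≤ Nf := by
    intro k
    have h1 : T k ^ P ≤ Nf ^ P := by rw [hNP]; exact ENNReal.le_tsum k
    exact (ENNReal.rpow_le_rpow_iff hP).1 h1
  have hTU : ∀ k : ℕ, k ≠ 0 → T k = U (k:ℤ) := by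
    intro k hk
    simp only [hT, hU, pieceN, if_neg hk]
    norm_num
  have hslice_le_S : ∀ s : Set (En n), sliceNorm n t r q (s.indicator g) ≤ S :=
    fun s => sliceNorm_mono hr0 q (fun y => Set.indicator_le_self s g y)
  have hT0 : T 0 = sliceNorm n t r q ((pieceN n 0).indicator g) := by
    simp [hT]
  have hUneg : ∀ k : ℤ, k ≤ 0 → U k ≤ (2:ℝ≥0∞)^((k:ℝ)*α) * Nf := by
    intro k hk
    refine mul_le_mul_right ?_ _
    calc sliceNorm n t r q ((shell n k).indicator g)
        ≤ sliceNorm n t r q ((pieceN n 0).indicator g) := by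
          refine sliceNorm_mono hr0 q fun y => ?_
          have hsub : shell n k ⊆ pieceN n 0 := by
            rw [pieceN, if_pos rfl]; exact shell_subset_ballZ_zero hk
          exact Set.indicator_le_indicator_of_subset hsub (fun a => zero_le) y
      _ = T 0 := hT0.symm
      _ ≤ Nf := hTle 0
  have hHbound : Hf ≤ cH * Nf := by
    have hterm : ∀ k : ℤ, U k ^ P ≤
        (if k ≤ 0 then (2:ℝ≥0∞)^((k:ℝ)*(α*P)) else 0) * Nf ^ P
        + (if 1 ≤ k then T k.toNat ^ P else 0) := by
      intro k
      by_cases hk : k ≤ 0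
      · rw [if_pos hk, if_neg (by omega)]
        refine le_trans (ENNReal.rpow_le_rpow (hUneg k hk) hP.le) ?_
        rw [add_zero, ENNReal.mul_rpow_of_nonneg _ _ hP.le, ← ENNReal.rpow_mul,
          mul_assoc]
      · rw [if_neg hk, if_pos (by omega), zero_mul, zero_add]
        have hkt : ((k.toNat : ℕ) : ℤ) = k := Int.toNat_of_nonneg (by omega)
        refine le_of_eq ?_
        rw [hTU k.toNat (by omega), hkt]
    have hsum : Hf ^ P ≤ c₁ * Nf ^ P + Nf ^ P := by
      rw [hHP]
      refine le_trans (ENNReal.tsum_le_tsum hterm) ?_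
      rw [ENNReal.tsum_add]
      refine add_le_add ?_ ?_
      · rw [ENNReal.tsum_mul_right]
        refine mul_le_mul_left ?_ _
        have hinj : Function.Injective (fun m : ℕ => -(m:ℤ)) := by
          intro a b hab; dsimp only at hab; omega
        have hsupp : Function.support
            (fun k : ℤ => if k ≤ 0 then (2:ℝ≥0∞)^((k:ℝ)*(α*P)) else 0)
            ⊆ Set.range (fun m : ℕ => -(m:ℤ)) := by
          intro k hk
          rw [Function.mem_support] at hk
          by_cases h : k ≤ 0
          · exact ⟨(-k).toNat, by dsimp only; omega⟩
          · rw [if_neg h] at hk; exact absurd rfl hk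
        have hre := Function.Injective.tsum_eq hinj hsupp
        rw [← hre]
        refine le_of_eq ((tsum_congr fun m => ?_).trans (ENNReal.tsum_geometric x₁))
        rw [if_pos (show -(m:ℤ) ≤ 0 by omega), hx1, ← ENNReal.rpow_natCast _ m,
          ← ENNReal.rpow_mul]
        congr 1
        push_cast
        ring
      · have hinj : Function.Injective (fun m : ℕ => (m:ℤ)+1) := by
          intro a b hab; dsimp only at hab; omega
        have hsupp : Function.support
            (fun k : ℤ => if 1 ≤ k then T k.toNat ^ P else 0)
            ⊆ Set.range (fun m : ℕ => (m:ℤ)+1) := by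
          intro k hk
          rw [Function.mem_support] at hk
          by_cases h : 1 ≤ k
          · exact ⟨(k-1).toNat, by dsimp only; omega⟩
          · rw [if_neg h] at hk; exact absurd rfl hk
        rw [← Function.Injective.tsum_eq hinj hsupp, hNP]
        refine le_trans (le_of_eq (tsum_congr fun m => ?_))
          (ENNReal.tsum_comp_le_tsum_of_injective (add_left_injective 1)
            (fun m => T m ^ P))
        rw [if_pos (show (1:ℤ) ≤ (m:ℤ)+1 by omega)]
        have hmn : ((m:ℤ)+1).toNat = m + 1 := by omega
        rw [hmn]
    have hsum2 : Hf ^ P ≤ (c₁ + 1) * Nf ^ P := by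
      rw [add_mul, one_mul]
      exact hsum
    have h2 := ENNReal.rpow_le_rpow hsum2 (by positivity : (0:ℝ) ≤ 1/P)
    rw [← ENNReal.rpow_mul, mul_one_div, div_self hP.ne', ENNReal.rpow_one,
      ENNReal.mul_rpow_of_nonneg _ _ (by positivity : (0:ℝ) ≤ 1/P),
      ← ENNReal.rpow_mul, mul_one_div, div_self hP.ne', ENNReal.rpow_one] at h2
    exact h2
  have hSbound : S ≤ c₂ * Nf := by
    have h1 : S ≤ ∑' k : ℕ, sliceNorm n t r q ((pieceN n k).indicator g) :=
      sliceNorm_tsum_pieces hr hq hgmeas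
    have h2 : ∀ k : ℕ, sliceNorm n t r q ((pieceN n k).indicator g) ≤ x₂ ^ k * Nf := by
      intro k
      have h4 : sliceNorm n t r q ((pieceN n k).indicator g)
          = (2:ℝ≥0∞)^(-((k:ℝ)*α)) * T k := by
        rw [hT]
        rw [← mul_assoc, ENNReal.rpow_neg,
          ENNReal.inv_mul_cancel (two_rpow_ne_zero _) (two_rpow_ne_top _), one_mul]
      rw [h4]
      calc (2:ℝ≥0∞)^(-((k:ℝ)*α)) * T k ≤ (2:ℝ≥0∞)^(-((k:ℝ)*α)) * Nf :=
            mul_le_mul_right (hTle k) _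
        _ = x₂ ^ k * Nf := by
            congr 1
            rw [hx2, ← ENNReal.rpow_natCast _ k, ← ENNReal.rpow_mul]
            congr 1
            ring
    refine le_trans h1 (le_trans (ENNReal.tsum_le_tsum h2) ?_)
    rw [ENNReal.tsum_mul_right, ENNReal.tsum_geometric]
  have hlow : Hf + S ≤ D * Nf := by
    rw [hD, add_mul]
    exact add_le_add hHbound hSbound
  have hup : Nf ≤ cU * (Hf + S) := by
    have hT0S : T 0 ≤ S := by rw [hT0]; exact hslice_le_S _
    have hsplit : Nf ^ P ≤ S ^ P + Hf ^ P := by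
      rw [hNP, ENNReal.tsum_eq_add_tsum_ite 0]
      refine add_le_add (ENNReal.rpow_le_rpow hT0S hP.le) ?_
      rw [hHP]
      refine le_trans (ENNReal.tsum_le_tsum (f := _) (g := fun k : ℕ => U (k:ℤ) ^ P)
        fun k => ?_) (ENNReal.tsum_comp_le_tsum_of_injective
          (fun a b h => by exact_mod_cast h) (fun k => U k ^ P))
      by_cases hk : k = 0
      · rw [if_pos hk]; exact zero_le
      · rw [if_neg hk, hTU k hk]
    have h5 : Nf ^ P ≤ 2 * (Hf + S) ^ P := by
      refine le_trans hsplit ?_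
      have hS' : S ^ P ≤ (Hf + S) ^ P := ENNReal.rpow_le_rpow le_add_self hP.le
      have hH' : Hf ^ P ≤ (Hf + S) ^ P := ENNReal.rpow_le_rpow le_self_add hP.le
      calc S^P + Hf^P ≤ (Hf+S)^P + (Hf+S)^P := add_le_add hS' hH'
        _ = 2 * (Hf+S)^P := (two_mul _).symm
    have h6 := ENNReal.rpow_le_rpow h5 (by positivity : (0:ℝ) ≤ 1/P)
    rw [← ENNReal.rpow_mul, mul_one_div, div_self hP.ne', ENNReal.rpow_one,
      ENNReal.mul_rpow_of_nonneg _ _ (by positivity : (0:ℝ) ≤ 1/P),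
      ← ENNReal.rpow_mul, mul_one_div, div_self hP.ne', ENNReal.rpow_one] at h6
    exact h6
  constructor
  · rw [hHC, hSC, hNC]
    have hCN : Hf + S ≤ (C : ℝ≥0∞) * Nf := le_trans hlow (mul_le_mul_left hDleC _)
    calc (C : ℝ≥0∞)⁻¹ * (Hf + S) ≤ (C : ℝ≥0∞)⁻¹ * ((C : ℝ≥0∞) * Nf) :=
          mul_le_mul_right hCN _
      _ = Nf := by rw [← mul_assoc, ENNReal.inv_mul_cancel hCne0 ENNReal.coe_ne_top,
          one_mul]
  · rw [hHC, hSC, hNC]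
    exact le_trans hup (mul_le_mul_left hcUleC _)
end
end
end

section
/- Let n ≥ 1, α, t, p ∈ (0,∞), r ∈ (1,∞) and q ∈ [1,∞). There is a constant C > 0, independent of the data, such that: whenever (λ_k)_{k≥0} are nonnegative reals with ∑_{k=0}^{∞} λ_k^p < ∞, (b_k)_{k≥0} are measurable functions with supp(b_k) ⊆ B_k and ‖b_k‖_{(E_r^q)_t} ≤ 2^{-kα} for every k ≥ 0, and f : ℝⁿ → ℂ satisfies f(x) = ∑_{k=0}^{∞} λ_k b_k(x) with the series converging absolutely for almost every x, then ‖f‖_{(KE^{α,p}_{q,r})_t}^p ≤ C ∑_{k=0}^{∞} λ_k^p; in particular f ∈ (KE^{α,p}_{q,r})_t(ℝⁿ). -/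
open MeasureTheory Metric Set ENNReal
open scoped NNReal

noncomputable section

namespace BlockAux

variable {X : Type*} [MeasurableSpace X]

/-- Finite Minkowski inequality for `lintegral`. -/
lemma lp_sum_le (μ : Measure X) {P : ℝ} (hP : 1 ≤ P) (f : ℕ → X → ℝ≥0∞)
    (hf : ∀ k, Measurable (f k)) (N : ℕ) :
    (∫⁻ a, (∑ k ∈ Finset.range N, f k a) ^ P ∂μ) ^ (1 / P)
      ≤ ∑ k ∈ Finset.range N, (∫⁻ a, f k a ^ P ∂μ) ^ (1 / P) := by
  have hP0 : (0:ℝ) < P := lt_of_lt_of_le one_pos hP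
  induction N with
  | zero =>
      simp only [Finset.range_zero, Finset.sum_empty]
      rw [ENNReal.zero_rpow_of_pos hP0, lintegral_zero,
        ENNReal.zero_rpow_of_pos (by positivity : (0:ℝ) < 1 / P)]
  | succ N ih =>
      simp_rw [Finset.sum_range_succ]
      refine le_trans (ENNReal.lintegral_Lp_add_le ?_ (hf N).aemeasurable hP) (by gcongr)
      exact (Finset.measurable_sum (Finset.range N) fun k _ => hf k).aemeasurable

lemma iSup_rpow {P : ℝ} (hP : 0 < P) (g : ℕ → ℝ≥0∞) :
    (⨆ N, g N) ^ P = ⨆ N, g N ^ P := by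
  apply le_antisymm
  · have h1 : ⨆ N, g N ≤ (⨆ N, g N ^ P) ^ P⁻¹ := by
      refine iSup_le fun N => ?_
      rw [← ENNReal.rpow_rpow_inv (ne_of_gt hP) (g N)]
      exact ENNReal.rpow_le_rpow (le_iSup (fun N => g N ^ P) N) (by positivity)
    calc (⨆ N, g N) ^ P ≤ ((⨆ N, g N ^ P) ^ P⁻¹) ^ P :=
          ENNReal.rpow_le_rpow h1 hP.le
      _ = ⨆ N, g N ^ P := ENNReal.rpow_inv_rpow (ne_of_gt hP) _
  · exact iSup_le fun N => ENNReal.rpow_le_rpow (le_iSup g N) hP.le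

/-- Countable Minkowski inequality for `lintegral`. -/
lemma lp_tsum_le (μ : Measure X) {P : ℝ} (hP : 1 ≤ P) (f : ℕ → X → ℝ≥0∞)
    (hf : ∀ k, Measurable (f k)) :
    (∫⁻ a, (∑' k, f k a) ^ P ∂μ) ^ (1 / P) ≤ ∑' k, (∫⁻ a, f k a ^ P ∂μ) ^ (1 / P) := by
  have hP0 : (0:ℝ) < P := lt_of_lt_of_le one_pos hP
  set R := ∑' k, (∫⁻ a, f k a ^ P ∂μ) ^ (1 / P) with hR
  have key : (∫⁻ a, (∑' k, f k a) ^ P ∂μ) ≤ R ^ P := by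
    have h1 : ∀ a, (∑' k, f k a) ^ P = ⨆ N, (∑ k ∈ Finset.range N, f k a) ^ P := by
      intro a
      rw [ENNReal.tsum_eq_iSup_nat, iSup_rpow hP0]
    simp_rw [h1]
    rw [lintegral_iSup (fun N => ((Finset.measurable_sum (Finset.range N) fun k _ => hf k).pow
        measurable_const)) ?mono]
    case mono =>
      intro N M hNM a
      exact ENNReal.rpow_le_rpow (Finset.sum_le_sum_of_subset
        (Finset.range_subset_range.2 hNM)) hP0.le
    refine iSup_le fun N => ?_
    have h2 : ((∫⁻ a, (∑ k ∈ Finset.range N, f k a) ^ P ∂μ) ^ (1 / P)) ^ P ≤ R ^ P := by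
      refine ENNReal.rpow_le_rpow (le_trans (lp_sum_le μ hP f hf N) ?_) hP0.le
      exact ENNReal.sum_le_tsum (Finset.range N)
    rwa [one_div, ENNReal.rpow_inv_rpow (ne_of_gt hP0)] at h2
  calc (∫⁻ a, (∑' k, f k a) ^ P ∂μ) ^ (1 / P) ≤ (R ^ P) ^ (1 / P) :=
        ENNReal.rpow_le_rpow key (by positivity)
    _ = R := by rw [one_div, ENNReal.rpow_rpow_inv (ne_of_gt hP0)]

/-- Subadditivity of `x ↦ x^P` for `0 < P ≤ 1`, countable version. -/
lemma tsum_rpow_le {P : ℝ} (hP0 : 0 < P) (hP1 : P ≤ 1) (f : ℕ → ℝ≥0∞) :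
    (∑' k, f k) ^ P ≤ ∑' k, f k ^ P := by
  rw [ENNReal.tsum_eq_iSup_nat, iSup_rpow hP0]
  refine iSup_le fun N => ?_
  have : (∑ k ∈ Finset.range N, f k) ^ P ≤ ∑ k ∈ Finset.range N, f k ^ P := by
    induction N with
    | zero => simp [ENNReal.zero_rpow_of_pos hP0]
    | succ N ih =>
        simp_rw [Finset.sum_range_succ]
        exact le_trans (ENNReal.rpow_add_le_add_rpow _ _ hP0.le hP1) (by gcongr)
  exact le_trans this (ENNReal.sum_le_tsum _)

lemma tsum_ite_shift_le (h : ℕ → ℝ≥0∞) (j : ℕ) :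
    ∑' k, (if j ≤ k then h (k - j) else 0) ≤ ∑' i, h i := by
  rw [ENNReal.tsum_eq_iSup_sum]
  refine iSup_le fun s => ?_
  rw [← Finset.sum_filter]
  have himg : ∑ k ∈ (s.filter (fun k => j ≤ k)), h (k - j)
      = ∑ i ∈ (s.filter (fun k => j ≤ k)).image (fun k => k - j), h i := by
    rw [Finset.sum_image]
    intro a ha b hb hab
    simp only [Finset.coe_filter, Finset.mem_filter, Set.mem_setOf_eq] at ha hb
    beta_reduce at hab
    omega
  rw [himg]
  exact ENNReal.sum_le_tsum _

lemma tsum_ite_shift_le' (h : ℕ → ℝ≥0∞) (k : ℕ) :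
    ∑' j, (if j ≤ k then h (k - j) else 0) ≤ ∑' i, h i := by
  rw [ENNReal.tsum_eq_iSup_sum]
  refine iSup_le fun s => ?_
  rw [← Finset.sum_filter]
  have himg : ∑ j ∈ (s.filter (fun j => j ≤ k)), h (k - j)
      = ∑ i ∈ (s.filter (fun j => j ≤ k)).image (fun j => k - j), h i := by
    rw [Finset.sum_image]
    intro a ha b hb hab
    simp only [Finset.coe_filter, Finset.mem_filter, Set.mem_setOf_eq] at ha hb
    beta_reduce at hab
    omega
  rw [himg]
  exact ENNReal.sum_le_tsum _

lemma swap_geom (d : ℝ≥0∞) (w : ℕ → ℝ≥0∞) :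
    ∑' (j : ℕ), ∑' (k : ℕ), (if j ≤ k then w k * d ^ (k - j) else 0)
      ≤ (1 - d)⁻¹ * ∑' k, w k := by
  rw [ENNReal.tsum_comm]
  calc ∑' (k : ℕ), ∑' (j : ℕ), (if j ≤ k then w k * d ^ (k - j) else 0)
      ≤ ∑' (k : ℕ), w k * (1 - d)⁻¹ := by
        refine ENNReal.tsum_le_tsum fun k => ?_
        have : ∑' (j : ℕ), (if j ≤ k then w k * d ^ (k - j) else 0)
            = w k * ∑' (j : ℕ), (if j ≤ k then d ^ (k - j) else 0) := by
          rw [← ENNReal.tsum_mul_left]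
          congr 1; funext j
          by_cases hj : j ≤ k <;> simp [hj]
        rw [this]
        refine mul_le_mul_right (le_trans (tsum_ite_shift_le' (fun i => d ^ i) k) ?_) _
        rw [ENNReal.tsum_geometric]
    _ = (1 - d)⁻¹ * ∑' k, w k := by rw [ENNReal.tsum_mul_right, mul_comm]


lemma pow_rpow_comm (c : ℝ≥0∞) (m : ℕ) {P : ℝ} (hP : 0 ≤ P) :
    (c ^ m) ^ P = (c ^ P) ^ m := by
  rw [← ENNReal.rpow_natCast c m, ← ENNReal.rpow_mul, mul_comm, ENNReal.rpow_mul,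
    ENNReal.rpow_natCast]

lemma geom_inv_ne_top {d : ℝ≥0∞} (hd : d < 1) : (1 - d)⁻¹ ≠ ∞ :=
  ENNReal.inv_ne_top.2 (ne_of_gt (tsub_pos_of_lt hd))

/-- Key summation lemma with geometric decay. -/
lemma key_sum {P : ℝ} (hP : 0 < P) {c : ℝ≥0∞} (hc0 : c ≠ 0) (hc1 : c < 1) :
    ∃ K : ℝ≥0∞, K ≠ ∞ ∧ ∀ v : ℕ → ℝ≥0∞,
      ∑' (j : ℕ), (∑' (k : ℕ), if j ≤ k then v k * c ^ (k - j) else 0) ^ P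
        ≤ K * ∑' (k : ℕ), v k ^ P := by
  have hctop : c ≠ ∞ := ne_top_of_lt (lt_of_lt_of_le hc1 le_top)
  rcases le_or_gt P 1 with hP1 | hP1
  · -- case P ≤ 1
    have hd : c ^ P < 1 := ENNReal.rpow_lt_one hc1 hP
    refine ⟨(1 - c ^ P)⁻¹, geom_inv_ne_top hd, fun v => ?_⟩
    calc ∑' (j : ℕ), (∑' (k : ℕ), if j ≤ k then v k * c ^ (k - j) else 0) ^ P
        ≤ ∑' (j : ℕ), ∑' (k : ℕ), (if j ≤ k then v k * c ^ (k - j) else 0) ^ P := by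
          exact ENNReal.tsum_le_tsum fun j => tsum_rpow_le hP hP1 _
      _ = ∑' (j : ℕ), ∑' (k : ℕ), (if j ≤ k then v k ^ P * (c ^ P) ^ (k - j) else 0) := by
          congr 1; funext j; congr 1; funext k
          by_cases hj : j ≤ k
          · simp only [hj, if_true]
            rw [ENNReal.mul_rpow_of_nonneg _ _ hP.le, pow_rpow_comm c _ hP.le]
          · simp [hj, ENNReal.zero_rpow_of_pos hP]
      _ ≤ (1 - c ^ P)⁻¹ * ∑' (k : ℕ), v k ^ P := swap_geom _ _
  · -- case 1 < P
    set P' := Real.conjExponent P with hP'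
    have hpq : P.HolderConjugate P' := Real.HolderConjugate.conjExponent hP1
    set e : ℝ≥0∞ := c ^ ((1:ℝ)/2) with he
    have he1 : e < 1 := ENNReal.rpow_lt_one hc1 (by norm_num)
    have hee : e * e = c := by
      rw [he, ← ENNReal.rpow_add _ _ hc0 hctop]
      norm_num
    have hd1 : e ^ P < 1 := ENNReal.rpow_lt_one he1 hP
    have hd' : e ^ P' < 1 := ENNReal.rpow_lt_one he1 hpq.symm.pos
    set K2 : ℝ≥0∞ := (((1 - e ^ P')⁻¹) ^ (1/P')) ^ P with hK2
    have hK2top : K2 ≠ ∞ := by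
      apply (ENNReal.rpow_lt_top_of_nonneg hP.le ?_).ne
      exact (ENNReal.rpow_lt_top_of_nonneg (hpq.symm.one_div_nonneg) (geom_inv_ne_top hd')).ne
    refine ⟨K2 * (1 - e ^ P)⁻¹, ENNReal.mul_ne_top hK2top (geom_inv_ne_top hd1), fun v => ?_⟩
    have step1 : ∀ j : ℕ,
        (∑' (k : ℕ), if j ≤ k then v k * c ^ (k - j) else 0) ^ P
          ≤ K2 * ∑' (k : ℕ), (if j ≤ k then v k ^ P * (e ^ P) ^ (k - j) else 0) := by
      intro j
      set u : ℕ → ℝ≥0∞ := fun k => if j ≤ k then v k * e ^ (k - j) else 0 with hu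
      set w : ℕ → ℝ≥0∞ := fun k => if j ≤ k then e ^ (k - j) else 0 with hw
      have hsplit : ∀ k, (if j ≤ k then v k * c ^ (k - j) else 0) = u k * w k := by
        intro k
        by_cases hj : j ≤ k
        · simp only [hu, hw, hj, if_true]
          rw [mul_assoc, ← mul_pow, hee]
        · simp [hu, hw, hj]
      have holder : ∑' (k : ℕ), u k * w k
          ≤ (∑' k, u k ^ P) ^ (1/P) * (∑' k, w k ^ P') ^ (1/P') := by
        have := ENNReal.lintegral_mul_le_Lp_mul_Lq (Measure.count : Measure ℕ) hpq
          (f := u) (g := w) (measurable_from_top.aemeasurable) (measurable_from_top.aemeasurable)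
        simpa only [lintegral_count, Pi.mul_apply] using this
      have hwsum : (∑' k, w k ^ P') ≤ (1 - e ^ P')⁻¹ := by
        have : ∀ k, w k ^ P' = (if j ≤ k then (e ^ P') ^ (k - j) else 0) := by
          intro k
          by_cases hj : j ≤ k
          · simp only [hw, hj, if_true]; exact pow_rpow_comm e _ hpq.symm.nonneg
          · simp [hw, hj, ENNReal.zero_rpow_of_pos hpq.symm.pos]
        simp_rw [this]
        exact le_trans (tsum_ite_shift_le (fun i => (e ^ P') ^ i) j)
          (le_of_eq (ENNReal.tsum_geometric _))
      have husum : ∀ k, u k ^ P = (if j ≤ k then v k ^ P * (e ^ P) ^ (k - j) else 0) := by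
        intro k
        by_cases hj : j ≤ k
        · simp only [hu, hj, if_true]
          rw [ENNReal.mul_rpow_of_nonneg _ _ hP.le, pow_rpow_comm e _ hP.le]
        · simp [hu, hj, ENNReal.zero_rpow_of_pos hP]
      calc (∑' (k : ℕ), if j ≤ k then v k * c ^ (k - j) else 0) ^ P
          = (∑' (k : ℕ), u k * w k) ^ P := by simp_rw [hsplit]
        _ ≤ ((∑' k, u k ^ P) ^ (1/P) * (∑' k, w k ^ P') ^ (1/P')) ^ P :=
            ENNReal.rpow_le_rpow holder hP.le
        _ = (∑' k, u k ^ P) * ((∑' k, w k ^ P') ^ (1/P')) ^ P := by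
            rw [ENNReal.mul_rpow_of_nonneg _ _ hP.le, one_div,
              ENNReal.rpow_inv_rpow (ne_of_gt hP)]
        _ ≤ (∑' k, u k ^ P) * K2 := by
            refine mul_le_mul_right ?_ _
            exact ENNReal.rpow_le_rpow (ENNReal.rpow_le_rpow hwsum (hpq.symm.one_div_nonneg)) hP.le
        _ = K2 * ∑' (k : ℕ), (if j ≤ k then v k ^ P * (e ^ P) ^ (k - j) else 0) := by
            rw [mul_comm]; congr 1; exact tsum_congr husum
    calc ∑' (j : ℕ), (∑' (k : ℕ), if j ≤ k then v k * c ^ (k - j) else 0) ^ P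
        ≤ ∑' (j : ℕ), K2 * ∑' (k : ℕ), (if j ≤ k then v k ^ P * (e ^ P) ^ (k - j) else 0) :=
          ENNReal.tsum_le_tsum step1
      _ = K2 * ∑' (j : ℕ), ∑' (k : ℕ), (if j ≤ k then v k ^ P * (e ^ P) ^ (k - j) else 0) :=
          ENNReal.tsum_mul_left
      _ ≤ K2 * ((1 - e ^ P)⁻¹ * ∑' (k : ℕ), v k ^ P) := mul_le_mul_right (swap_geom _ _) _
      _ = K2 * (1 - e ^ P)⁻¹ * ∑' (k : ℕ), v k ^ P := by rw [mul_assoc]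


variable {n : ℕ} {t r : ℝ} {q : ℝ≥0∞}

lemma sliceNorm_eq (hq' : q ≠ ∞) (g : En n → ℝ≥0∞) : sliceNorm n t r q g
    = (∫⁻ x, (((volume (ball x t))⁻¹ * ∫⁻ y in ball x t, g y ^ r) ^ (1 / r)) ^ q.toReal)
        ^ (1 / q.toReal) := if_neg hq'

lemma sliceNorm_mono_ae (hq' : q ≠ ∞) (hr0 : 0 < r) {g h : En n → ℝ≥0∞}
    (hgh : g ≤ᵐ[volume] h) : sliceNorm n t r q g ≤ sliceNorm n t r q h := by
  rw [sliceNorm_eq hq', sliceNorm_eq hq']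
  refine ENNReal.rpow_le_rpow ?_ (by positivity)
  refine lintegral_mono fun x => ?_
  refine ENNReal.rpow_le_rpow (ENNReal.rpow_le_rpow (mul_le_mul_right ?_ _) (by positivity))
    ENNReal.toReal_nonneg
  refine lintegral_mono_ae (ae_restrict_of_ae (hgh.mono fun y hy => ?_))
  exact ENNReal.rpow_le_rpow hy hr0.le

lemma sliceNorm_zero (hq' : q ≠ ∞) (hr0 : 0 < r) (hQ : 0 < q.toReal) :
    sliceNorm n t r q (fun _ => (0:ℝ≥0∞)) = 0 := by
  rw [sliceNorm_eq hq']
  simp only [ENNReal.zero_rpow_of_pos hr0, lintegral_zero, mul_zero,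
    ENNReal.zero_rpow_of_pos (by positivity : (0:ℝ) < 1/r),
    ENNReal.zero_rpow_of_pos hQ, lintegral_zero,
    ENNReal.zero_rpow_of_pos (by positivity : (0:ℝ) < 1/q.toReal)]

lemma sliceNorm_const_mul (hq' : q ≠ ∞) (hr0 : 0 < r) (hQ : 0 < q.toReal) {v : ℝ≥0∞} (hv : v ≠ ∞)
    (g : En n → ℝ≥0∞) :
    sliceNorm n t r q (fun y => v * g y) = v * sliceNorm n t r q g := by
  rw [sliceNorm_eq hq', sliceNorm_eq hq']
  have hvr : v ^ r ≠ ∞ := (ENNReal.rpow_lt_top_of_nonneg hr0.le hv).ne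
  have inner : ∀ x : En n,
      (((volume (ball x t))⁻¹ * ∫⁻ y in ball x t, (v * g y) ^ r) ^ (1 / r))
        = v * (((volume (ball x t))⁻¹ * ∫⁻ y in ball x t, g y ^ r) ^ (1 / r)) := by
    intro x
    have h1 : (∫⁻ y in ball x t, (v * g y) ^ r) = v ^ r * ∫⁻ y in ball x t, g y ^ r := by
      simp_rw [ENNReal.mul_rpow_of_nonneg _ _ hr0.le]
      exact lintegral_const_mul' _ _ hvr
    rw [h1, mul_left_comm, ENNReal.mul_rpow_of_nonneg _ _ (by positivity : (0:ℝ) ≤ 1/r),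
      ← ENNReal.rpow_mul, mul_one_div_cancel hr0.ne', ENNReal.rpow_one]
  simp_rw [inner, ENNReal.mul_rpow_of_nonneg _ _ (ENNReal.toReal_nonneg : (0:ℝ) ≤ q.toReal)]
  rw [lintegral_const_mul' _ _ ((ENNReal.rpow_lt_top_of_nonneg ENNReal.toReal_nonneg hv).ne),
    ENNReal.mul_rpow_of_nonneg _ _ (by positivity : (0:ℝ) ≤ 1/q.toReal),
    ← ENNReal.rpow_mul]
  rw [mul_one_div_cancel hQ.ne', ENNReal.rpow_one]

lemma measurable_lintegral_ball {h : En n → ℝ≥0∞} (hh : Measurable h) (t : ℝ) :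
    Measurable fun x : En n => ∫⁻ y in ball x t, h y := by
  have hset : IsOpen {p : En n × En n | dist p.2 p.1 < t} :=
    isOpen_lt (continuous_snd.dist continuous_fst) continuous_const
  have heq : ∀ x : En n, (∫⁻ y in ball x t, h y)
      = ∫⁻ y, ({p : En n × En n | dist p.2 p.1 < t}.indicator (fun p => h p.2)) (x, y) := by
    intro x
    rw [← lintegral_indicator measurableSet_ball]
    refine lintegral_congr fun y => ?_
    by_cases hy : y ∈ ball x t
    · have : ((x, y) : En n × En n) ∈ {p : En n × En n | dist p.2 p.1 < t} := by
        simpa [mem_ball] using hy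
      simp [Set.indicator_of_mem hy, Set.indicator_of_mem this]
    · have : ((x, y) : En n × En n) ∉ {p : En n × En n | dist p.2 p.1 < t} := by
        simpa [mem_ball] using hy
      simp [Set.indicator_of_notMem hy, Set.indicator_of_notMem this]
  simp_rw [heq]
  exact Measurable.lintegral_prod_right'
    ((hh.comp measurable_snd).indicator hset.measurableSet)

lemma measurable_inner (hq' : q ≠ ∞) {h : En n → ℝ≥0∞} (hh : Measurable h) (t r : ℝ) :
    Measurable fun x : En n =>
      (((volume (ball x t))⁻¹ * ∫⁻ y in ball x t, h y ^ r) ^ (1 / r)) := by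
  have h1 : Measurable fun x : En n => volume (ball x t) := by
    have := measurable_lintegral_ball (measurable_const : Measurable fun _ : En n => (1:ℝ≥0∞)) t
    simpa [setLIntegral_one] using this
  have h2 := measurable_lintegral_ball (hh.pow measurable_const : Measurable fun y => h y ^ r) t
  exact ((h1.inv.mul h2).pow measurable_const)

/-- Countable Minkowski for the slice norm. -/
lemma sliceNorm_tsum_le (hq : 1 ≤ q) (hq' : q ≠ ∞) (hr : 1 ≤ r)
    (g : ℕ → En n → ℝ≥0∞) (hg : ∀ k, Measurable (g k)) :
    sliceNorm n t r q (fun y => ∑' k, g k y) ≤ ∑' k, sliceNorm n t r q (g k) := by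
  have hr0 : (0:ℝ) < r := lt_of_lt_of_le one_pos hr
  have hQ1 : 1 ≤ q.toReal := by
    rw [← ENNReal.toReal_one]
    exact ENNReal.toReal_mono hq' hq
  set F : ℕ → En n → ℝ≥0∞ := fun k x =>
    (((volume (ball x t))⁻¹ * ∫⁻ y in ball x t, g k y ^ r) ^ (1 / r)) with hF
  have hFmeas : ∀ k, Measurable (F k) := fun k => measurable_inner hq' (hg k) t r
  have hFx : ∀ (k : ℕ) (x : En n), F k x
      = ((volume (ball x t))⁻¹) ^ (1/r) * (∫⁻ y in ball x t, g k y ^ r) ^ (1/r) :=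
    fun k x => ENNReal.mul_rpow_of_nonneg _ _ (by positivity)
  have step1 : ∀ x : En n,
      (((volume (ball x t))⁻¹ * ∫⁻ y in ball x t, (∑' k, g k y) ^ r) ^ (1 / r))
        ≤ ∑' k, F k x := by
    intro x
    have mink := lp_tsum_le (volume.restrict (ball x t)) hr g hg
    calc ((volume (ball x t))⁻¹ * ∫⁻ y in ball x t, (∑' k, g k y) ^ r) ^ (1 / r)
        = ((volume (ball x t))⁻¹) ^ (1/r)
            * (∫⁻ y in ball x t, (∑' k, g k y) ^ r) ^ (1 / r) :=
          ENNReal.mul_rpow_of_nonneg _ _ (by positivity)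
      _ ≤ ((volume (ball x t))⁻¹) ^ (1/r)
            * ∑' k, (∫⁻ y in ball x t, g k y ^ r) ^ (1 / r) :=
          mul_le_mul_right mink _
      _ = ∑' k, ((volume (ball x t))⁻¹) ^ (1/r) * (∫⁻ y in ball x t, g k y ^ r) ^ (1 / r) :=
          ENNReal.tsum_mul_left.symm
      _ = ∑' k, F k x := tsum_congr fun k => (hFx k x).symm
  rw [sliceNorm_eq hq']
  calc (∫⁻ x, (((volume (ball x t))⁻¹ * ∫⁻ y in ball x t, (∑' k, g k y) ^ r) ^ (1 / r))
          ^ q.toReal) ^ (1 / q.toReal)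
      ≤ (∫⁻ x, (∑' k, F k x) ^ q.toReal) ^ (1 / q.toReal) := by
        refine ENNReal.rpow_le_rpow (lintegral_mono fun x => ?_) (by positivity)
        exact ENNReal.rpow_le_rpow (step1 x) ENNReal.toReal_nonneg
    _ ≤ ∑' k, (∫⁻ x, F k x ^ q.toReal) ^ (1 / q.toReal) :=
        lp_tsum_le volume hQ1 F hFmeas
    _ = ∑' k, sliceNorm n t r q (g k) := by
        congr 1; funext k; rw [sliceNorm_eq hq']


end BlockAux

/-- block decomposition of the non-homogeneous Herz-slice space
(converse direction). -/
theorem nonHomHerzSlice_block_synthesis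
    (n : ℕ) (hn : 1 ≤ n) (α t r : ℝ) (hα : 0 < α) (ht : 0 < t) (hr : 1 < r)
    (p : ℝ≥0∞) (hp : 0 < p) (hp' : p ≠ ∞) (q : ℝ≥0∞) (hq : 1 ≤ q) (hq' : q ≠ ∞) :
    ∃ C : ℝ≥0, 0 < C ∧
      ∀ (lam : ℕ → ℝ≥0) (b : ℕ → En n → ℂ) (f : En n → ℂ),
        (∀ k, Measurable (b k)) →
        (∑' k : ℕ, ((lam k : ℝ≥0∞)) ^ p.toReal < ∞) →
        (∀ k, Function.support (b k) ⊆ ballZ n (k : ℤ)) →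
        (∀ k : ℕ, sliceNormC n t r q (b k) ≤ (2 : ℝ≥0∞) ^ (-(k : ℝ) * α)) →
        (∀ᵐ x ∂(volume : Measure (En n)),
          Summable (fun k : ℕ => (lam k : ℝ) * ‖b k x‖) ∧
          f x = ∑' k : ℕ, ((lam k : ℝ) : ℂ) * b k x) →
        herzNonHomC n t r q α p f ^ p.toReal
          ≤ (C : ℝ≥0∞) * ∑' k : ℕ, ((lam k : ℝ≥0∞)) ^ p.toReal := by
  have hP0 : 0 < p.toReal := ENNReal.toReal_pos hp.ne' hp'
  have hr0 : (0:ℝ) < r := lt_trans one_pos hr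
  have hq0 : q ≠ 0 := (lt_of_lt_of_le one_pos hq).ne'
  have hQpos : 0 < q.toReal := ENNReal.toReal_pos hq0 hq'
  set c : ℝ≥0∞ := (2:ℝ≥0∞) ^ (-α) with hc
  have hc0 : c ≠ 0 := (ENNReal.rpow_pos (by norm_num) (by norm_num)).ne'
  have hc1 : c < 1 := ENNReal.rpow_lt_one_of_one_lt_of_neg (by norm_num) (by linarith)
  obtain ⟨K, hKtop, hK⟩ := BlockAux.key_sum hP0 hc0 hc1
  have hCK : K ≤ ((K.toNNReal + 1 : ℝ≥0) : ℝ≥0∞) := by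
    push_cast
    calc K = (K.toNNReal : ℝ≥0∞) := (ENNReal.coe_toNNReal hKtop).symm
      _ ≤ (K.toNNReal : ℝ≥0∞) + 1 := le_self_add
  refine ⟨K.toNNReal + 1, by positivity, ?_⟩
  intro lam b f hbmeas hsum hsupp hbnorm hae
  -- a.e. pointwise bound
  have key_ae : ∀ᵐ y ∂(volume : Measure (En n)),
      (‖f y‖₊ : ℝ≥0∞) ≤ ∑' k, (lam k : ℝ≥0∞) * (‖b k y‖₊ : ℝ≥0∞) := by
    filter_upwards [hae] with y hy
    obtain ⟨hsummable, heq⟩ := hy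
    have hnorm_eq : ∀ k : ℕ, ‖((lam k : ℝ) : ℂ) * b k y‖ = (lam k : ℝ) * ‖b k y‖ := by
      intro k
      rw [norm_mul, Complex.norm_real, Real.norm_eq_abs, abs_of_nonneg (lam k).coe_nonneg]
    have hsummable' : Summable fun k => ‖((lam k : ℝ) : ℂ) * b k y‖ := by
      simpa only [hnorm_eq] using hsummable
    have h1 : ‖f y‖ ≤ ∑' k, (lam k : ℝ) * ‖b k y‖ := by
      rw [heq]
      calc ‖∑' k, ((lam k : ℝ) : ℂ) * b k y‖ ≤ ∑' k, ‖((lam k : ℝ) : ℂ) * b k y‖ :=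
            norm_tsum_le_tsum_norm hsummable'
        _ = ∑' k, (lam k : ℝ) * ‖b k y‖ := tsum_congr hnorm_eq
    calc (‖f y‖₊ : ℝ≥0∞) = ENNReal.ofReal ‖f y‖ := (ofReal_norm _).symm
      _ ≤ ENNReal.ofReal (∑' k, (lam k : ℝ) * ‖b k y‖) := ENNReal.ofReal_le_ofReal h1
      _ = ∑' k, ENNReal.ofReal ((lam k : ℝ) * ‖b k y‖) :=
          ENNReal.ofReal_tsum_of_nonneg (fun k => by positivity) hsummable
      _ = ∑' k, (lam k : ℝ≥0∞) * (‖b k y‖₊ : ℝ≥0∞) := by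
          refine tsum_congr fun k => ?_
          rw [ENNReal.ofReal_mul (lam k).coe_nonneg, ofReal_norm,
            ENNReal.ofReal_coe_nnreal]
          rfl
  have hpiece_meas : ∀ j : ℕ, MeasurableSet (pieceN n j) := by
    intro j
    rw [pieceN]
    split
    · exact measurableSet_closedBall
    · exact (measurableSet_closedBall.diff measurableSet_closedBall)
  have hgmeas : ∀ j k : ℕ,
      Measurable ((pieceN n j).indicator (fun z => (lam k : ℝ≥0∞) * (‖b k z‖₊ : ℝ≥0∞))) :=
    fun j k => (((hbmeas k).nnnorm.coe_nnreal_ennreal).const_mul _).indicator (hpiece_meas j)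
  have hvanish : ∀ j k : ℕ, ¬ j ≤ k →
      ((pieceN n j).indicator (fun z => (lam k : ℝ≥0∞) * (‖b k z‖₊ : ℝ≥0∞))) = fun _ => 0 := by
    intro j k hjk
    have hj0 : j ≠ 0 := by omega
    funext y
    by_cases hy : y ∈ pieceN n j
    · rw [Set.indicator_of_mem hy]
      have hyshell : y ∈ shell n j := by rwa [pieceN, if_neg hj0] at hy
      have hysub : y ∉ ballZ n ((j:ℤ) - 1) := hyshell.2
      have hball : ballZ n (k:ℤ) ⊆ ballZ n ((j:ℤ) - 1) := by
        apply closedBall_subset_closedBall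
        apply zpow_le_zpow_right₀ (by norm_num : (1:ℝ) ≤ 2)
        omega
      have hb0 : b k y = 0 := by
        by_contra hb
        exact hysub (hball (hsupp k (Function.mem_support.2 hb)))
      simp [hb0]
    · rw [Set.indicator_of_notMem hy]
  have hconst : ∀ j k : ℕ,
      ((pieceN n j).indicator (fun z => (lam k : ℝ≥0∞) * (‖b k z‖₊ : ℝ≥0∞)))
        = fun y => (lam k : ℝ≥0∞) * (pieceN n j).indicator (fun z => (‖b k z‖₊ : ℝ≥0∞)) y := by
    intro j k; funext y; by_cases hy : y ∈ pieceN n j <;> simp [hy]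
  have hA : ∀ j : ℕ,
      sliceNorm n t r q ((pieceN n j).indicator fun y => (‖f y‖₊ : ℝ≥0∞))
        ≤ ∑' k, (if j ≤ k then (lam k : ℝ≥0∞) * (2:ℝ≥0∞) ^ (-(k:ℝ)*α) else 0) := by
    intro j
    have h1 : sliceNorm n t r q ((pieceN n j).indicator fun y => (‖f y‖₊ : ℝ≥0∞))
        ≤ sliceNorm n t r q (fun y =>
          ∑' k, ((pieceN n j).indicator (fun z => (lam k : ℝ≥0∞) * (‖b k z‖₊ : ℝ≥0∞))) y) := by
      apply BlockAux.sliceNorm_mono_ae hq' hr0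
      filter_upwards [key_ae] with y hy
      by_cases hmem : y ∈ pieceN n j
      · simp only [Set.indicator_of_mem hmem]
        exact hy
      · simp [Set.indicator_of_notMem hmem]
    refine le_trans h1 (le_trans (BlockAux.sliceNorm_tsum_le hq hq' hr.le _ (hgmeas j)) ?_)
    refine ENNReal.tsum_le_tsum fun k => ?_
    by_cases hjk : j ≤ k
    · rw [if_pos hjk, hconst j k,
        BlockAux.sliceNorm_const_mul hq' hr0 hQpos ENNReal.coe_ne_top]
      refine mul_le_mul_right ?_ _
      refine le_trans (BlockAux.sliceNorm_mono_ae hq' hr0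
        (ae_of_all _ fun y => Set.indicator_le_self _ _ y)) ?_
      exact hbnorm k
    · rw [if_neg hjk, hvanish j k hjk]
      exact le_of_eq (BlockAux.sliceNorm_zero hq' hr0 hQpos)
  have hterm : ∀ j k : ℕ, j ≤ k →
      (2:ℝ≥0∞) ^ ((j:ℝ)*α) * ((lam k : ℝ≥0∞) * (2:ℝ≥0∞) ^ (-(k:ℝ)*α))
        = (lam k : ℝ≥0∞) * c ^ (k - j) := by
    intro j k hjk
    have h2 : c ^ (k - j) = (2:ℝ≥0∞) ^ ((j:ℝ)*α + (-(k:ℝ))*α) := by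
      rw [hc, ← ENNReal.rpow_natCast (_ ^ (-α)), ← ENNReal.rpow_mul]
      congr 1
      rw [Nat.cast_sub hjk]
      ring
    rw [h2, mul_left_comm, ← ENNReal.rpow_add _ _ (by norm_num) (by norm_num)]
  have hmain : ∀ j : ℕ,
      (2:ℝ≥0∞) ^ ((j:ℝ)*α)
          * sliceNorm n t r q ((pieceN n j).indicator fun y => (‖f y‖₊ : ℝ≥0∞))
        ≤ ∑' k, (if j ≤ k then (lam k : ℝ≥0∞) * c ^ (k - j) else 0) := by
    intro j
    refine le_trans (mul_le_mul_right (hA j) _) (le_of_eq ?_)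
    rw [← ENNReal.tsum_mul_left]
    refine tsum_congr fun k => ?_
    by_cases hjk : j ≤ k
    · simp only [hjk, if_true]
      exact hterm j k hjk
    · simp [hjk]
  have hherz : herzNonHomC n t r q α p f ^ p.toReal
      = ∑' j : ℕ, ((2:ℝ≥0∞) ^ ((j:ℝ)*α)
          * sliceNorm n t r q ((pieceN n j).indicator fun y => (‖f y‖₊ : ℝ≥0∞))) ^ p.toReal := by
    rw [herzNonHomC, herzNonHom, if_neg hp', one_div, ENNReal.rpow_inv_rpow hP0.ne']
  calc herzNonHomC n t r q α p f ^ p.toReal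
      = ∑' j : ℕ, ((2:ℝ≥0∞) ^ ((j:ℝ)*α)
          * sliceNorm n t r q ((pieceN n j).indicator fun y => (‖f y‖₊ : ℝ≥0∞))) ^ p.toReal :=
        hherz
    _ ≤ ∑' j : ℕ, (∑' k, (if j ≤ k then (lam k : ℝ≥0∞) * c ^ (k - j) else 0)) ^ p.toReal :=
        ENNReal.tsum_le_tsum fun j => ENNReal.rpow_le_rpow (hmain j) hP0.le
    _ ≤ K * ∑' k : ℕ, ((lam k : ℝ≥0∞)) ^ p.toReal := hK _
    _ ≤ ((K.toNNReal + 1 : ℝ≥0) : ℝ≥0∞) * ∑' k : ℕ, ((lam k : ℝ≥0∞)) ^ p.toReal :=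
        mul_le_mul_left hCK _
end
end

section
/- (Hölder inequality for slice spaces.) Let n ≥ 1, t ∈ (0,∞), q ∈ [1,∞], r ∈ (1,∞), and let q', r' be the conjugate exponents, 1/q + 1/q' = 1/r + 1/r' = 1. Then for all measurable functions f, g : ℝⁿ → ℂ, ∫_{ℝⁿ} |f(x)g(x)| dx ≤ ‖f‖_{(E_r^q)_t} · ‖g‖_{(E_{r'}^{q'})_t}. -/
open MeasureTheory Metric Set ENNReal
open scoped NNReal

noncomputable section

section Aux

variable {n : ℕ}

lemma ballKernel_measurable (t : ℝ) {φ : En n → ℝ≥0∞} (hφ : Measurable φ) :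
    Measurable fun p : En n × En n => (ball p.1 t).indicator φ p.2 := by
  have hset : MeasurableSet {p : En n × En n | dist p.2 p.1 < t} :=
    (isOpen_lt (continuous_snd.dist continuous_fst) continuous_const).measurableSet
  have h := (hφ.comp measurable_snd).indicator hset
  have : (fun p : En n × En n => (ball p.1 t).indicator φ p.2)
      = {p : En n × En n | dist p.2 p.1 < t}.indicator fun p => φ p.2 := by
    ext p
    by_cases hp : dist p.2 p.1 < t <;>
      simp [Set.indicator_apply, hp, Metric.mem_ball]
  rw [this]; exact h

lemma measurable_ballIntegral (t : ℝ) {φ : En n → ℝ≥0∞} (hφ : Measurable φ) :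
    Measurable fun x : En n => ∫⁻ y in ball x t, φ y := by
  have : (fun x : En n => ∫⁻ y in ball x t, φ y)
      = fun x => ∫⁻ y, (ball x t).indicator φ y := by
    ext x; rw [lintegral_indicator measurableSet_ball]
  rw [this]
  exact (ballKernel_measurable t hφ).lintegral_prod_right'

lemma ball_average_lintegral {t : ℝ} (ht : 0 < t) {h : En n → ℝ≥0∞}
    (hh : Measurable h) :
    ∫⁻ y, h y = ∫⁻ x, (volume (ball x t))⁻¹ * ∫⁻ y in ball x t, h y := by
  set c := volume (ball (0 : En n) t) with hc
  have hcball : ∀ x : En n, volume (ball x t) = c := fun x =>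
    MeasureTheory.Measure.addHaar_ball_center volume x t
  have hc0 : c ≠ 0 := (measure_ball_pos volume (0 : En n) ht).ne'
  have hctop : c ≠ ∞ := measure_ball_lt_top.ne
  have key : ∫⁻ x, ∫⁻ y in ball x t, h y = c * ∫⁻ y, h y := by
    have e1 : ∀ x : En n, ∫⁻ y in ball x t, h y = ∫⁻ y, (ball x t).indicator h y := fun x =>
      (lintegral_indicator measurableSet_ball h).symm
    simp_rw [e1]
    rw [lintegral_lintegral_swap (ballKernel_measurable t hh).aemeasurable]
    have e2 : ∀ y : En n, (∫⁻ x, (ball x t).indicator h y) = h y * c := by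
      intro y
      have e3 : ∀ x : En n, (ball x t).indicator h y
          = (ball y t).indicator (fun _ => h y) x := by
        intro x
        by_cases hx : dist y x < t
        · rw [Set.indicator_of_mem (Metric.mem_ball.mpr hx),
            Set.indicator_of_mem (Metric.mem_ball.mpr (by rwa [dist_comm]))]
        · rw [Set.indicator_of_notMem (fun hmem => hx (Metric.mem_ball.mp hmem)),
            Set.indicator_of_notMem
              (fun hmem => hx (by rw [dist_comm]; exact Metric.mem_ball.mp hmem))]
      simp_rw [e3]
      rw [lintegral_indicator_const measurableSet_ball, hcball y]
    simp_rw [e2]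
    rw [lintegral_mul_const'' c hh.aemeasurable, mul_comm]
  simp_rw [hcball]
  rw [lintegral_const_mul' _ _ (by simp [hc0] : c⁻¹ ≠ ∞), key, ← mul_assoc,
    ENNReal.inv_mul_cancel hc0 hctop, one_mul]

lemma ball_holder (t : ℝ) {r r' : ℝ} (hrr' : r.HolderConjugate r')
    (F G : En n → ℝ≥0∞) (hF : Measurable F) (hG : Measurable G) (x : En n) :
    (volume (ball x t))⁻¹ * ∫⁻ y in ball x t, F y * G y
      ≤ ((volume (ball x t))⁻¹ * ∫⁻ y in ball x t, F y ^ r) ^ (1 / r)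
        * ((volume (ball x t))⁻¹ * ∫⁻ y in ball x t, G y ^ r') ^ (1 / r') := by
  have := ENNReal.lintegral_mul_le_Lp_mul_Lq
    ((volume (ball x t))⁻¹ • (volume.restrict (ball x t))) hrr'
    hF.aemeasurable hG.aemeasurable
  simpa [lintegral_smul_measure] using this

lemma outer_holder {α : Type*} [MeasurableSpace α] {μ : Measure α} (q q' : ℝ≥0∞)
    (hqq' : 1 / q + 1 / q' = 1) (A B : α → ℝ≥0∞)
    (hA : AEMeasurable A μ) (hB : AEMeasurable B μ) :
    ∫⁻ x, A x * B x ∂μ ≤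
      (if q = ∞ then essSup A μ
        else (∫⁻ x, A x ^ q.toReal ∂μ) ^ (1 / q.toReal)) *
      (if q' = ∞ then essSup B μ
        else (∫⁻ x, B x ^ q'.toReal ∂μ) ^ (1 / q'.toReal)) := by
  have hconj : ENNReal.HolderConjugate q q' := ENNReal.holderConjugate_iff.mpr (by simpa [one_div] using hqq')
  rcases eq_or_ne q ∞ with hqi | hqf
  · have hq'1 : q' = 1 := by
      have : q'⁻¹ = 1 := by
        have := ENNReal.holderConjugate_iff.mp hconj
        simpa [hqi] using this
      simpa using congrArg (·⁻¹) this
    rw [if_pos hqi, if_neg (by simp [hq'1]), hq'1]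
    simp only [ENNReal.toReal_one, ENNReal.rpow_one, one_div_one]
    calc ∫⁻ x, A x * B x ∂μ
        ≤ ∫⁻ x, essSup A μ * B x ∂μ :=
          lintegral_mono_ae ((ae_le_essSup A).mono fun x hx =>
            mul_le_mul_left hx (B x))
      _ = essSup A μ * ∫⁻ x, B x ∂μ := lintegral_const_mul'' _ hB
  rcases eq_or_ne q' ∞ with hq'i | hq'f
  · have hq1 : q = 1 := by
      have : q⁻¹ = 1 := by
        have := ENNReal.holderConjugate_iff.mp hconj
        simpa [hq'i] using this
      simpa using congrArg (·⁻¹) this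
    rw [if_pos hq'i, if_neg (by simp [hq1]), hq1]
    simp only [ENNReal.toReal_one, ENNReal.rpow_one, one_div_one]
    calc ∫⁻ x, A x * B x ∂μ
        ≤ ∫⁻ x, A x * essSup B μ ∂μ :=
          lintegral_mono_ae ((ae_le_essSup B).mono fun x hx =>
            mul_le_mul_right hx (A x))
      _ = (∫⁻ x, A x ∂μ) * essSup B μ := lintegral_mul_const'' _ hA
  · have hq0 : q ≠ 0 := ENNReal.HolderConjugate.ne_zero q q'
    have hq'0 : q' ≠ 0 := ENNReal.HolderConjugate.ne_zero q' q
    have hq1 : q ≠ 1 := by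
      rintro rfl
      have h0 : (1 : ℝ≥0∞) + q'⁻¹ = 1 + 0 := by simpa using ENNReal.holderConjugate_iff.mp hconj
      have h0' := (ENNReal.add_right_inj (by simp : (1 : ℝ≥0∞) ≠ ∞)).mp h0
      exact hq'f (by simpa using h0')
    have hq1' : 1 < q := lt_of_le_of_ne (ENNReal.HolderConjugate.one_le q q') (Ne.symm hq1)
    have h1 : 1 < q.toReal := by
      rw [← ENNReal.toReal_one]
      exact (ENNReal.toReal_lt_toReal (by simp) hqf).mpr hq1'
    have h2 : q.toReal⁻¹ + q'.toReal⁻¹ = 1 := by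
      have := congrArg ENNReal.toReal (ENNReal.holderConjugate_iff.mp hconj)
      rwa [ENNReal.toReal_add (by simp [hq0]) (by simp [hq'0]),
        ENNReal.toReal_inv, ENNReal.toReal_inv, ENNReal.toReal_one] at this
    rw [if_neg hqf, if_neg hq'f]
    exact ENNReal.lintegral_mul_le_Lp_mul_Lq μ (Real.holderConjugate_iff.mpr ⟨h1, h2⟩) hA hB

end Aux

/-- Hölder's inequality for slice spaces. -/
theorem slice_holder
    (n : ℕ) (hn : 1 ≤ n) (t r r' : ℝ) (ht : 0 < t) (hr : 1 < r)
    (hrr' : 1 / r + 1 / r' = 1)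
    (q q' : ℝ≥0∞) (hq : 1 ≤ q) (hqq' : 1 / q + 1 / q' = 1)
    (f g : En n → ℂ) (hf : Measurable f) (hg : Measurable g) :
    ∫⁻ x, (‖f x‖₊ : ℝ≥0∞) * (‖g x‖₊ : ℝ≥0∞)
      ≤ sliceNormC n t r q f * sliceNormC n t r' q' g := by
  classical
  have hFm : Measurable fun y => (‖f y‖₊ : ℝ≥0∞) := hf.nnnorm.coe_nnreal_ennreal
  have hGm : Measurable fun y => (‖g y‖₊ : ℝ≥0∞) := hg.nnnorm.coe_nnreal_ennreal
  have hrc : Real.HolderConjugate r r' := Real.holderConjugate_iff.mpr ⟨hr, by simpa [one_div] using hrr'⟩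
  have hAm : Measurable fun x : En n =>
      ((volume (ball x t))⁻¹ * ∫⁻ y in ball x t, (‖f y‖₊ : ℝ≥0∞) ^ r) ^ (1 / r) := by
    have h1 := measurable_ballIntegral (n := n) t
      (φ := fun y => ((‖f y‖₊ : ℝ≥0∞)) ^ r) (hFm.pow_const r)
    have h2 : Measurable fun x : En n => (volume (ball x t))⁻¹ := by
      simp_rw [MeasureTheory.Measure.addHaar_ball_center volume _ t]
      exact measurable_const
    exact (h2.mul h1).pow_const _
  have hBm : Measurable fun x : En n =>
      ((volume (ball x t))⁻¹ * ∫⁻ y in ball x t, (‖g y‖₊ : ℝ≥0∞) ^ r') ^ (1 / r') := by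
    have h1 := measurable_ballIntegral (n := n) t
      (φ := fun y => ((‖g y‖₊ : ℝ≥0∞)) ^ r') (hGm.pow_const r')
    have h2 : Measurable fun x : En n => (volume (ball x t))⁻¹ := by
      simp_rw [MeasureTheory.Measure.addHaar_ball_center volume _ t]
      exact measurable_const
    exact (h2.mul h1).pow_const _
  have step1 : ∫⁻ x, (‖f x‖₊ : ℝ≥0∞) * (‖g x‖₊ : ℝ≥0∞)
      ≤ ∫⁻ x, ((volume (ball x t))⁻¹ * ∫⁻ y in ball x t, (‖f y‖₊ : ℝ≥0∞) ^ r) ^ (1 / r)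
          * ((volume (ball x t))⁻¹ * ∫⁻ y in ball x t, (‖g y‖₊ : ℝ≥0∞) ^ r') ^ (1 / r') := by
    rw [ball_average_lintegral ht (h := fun y => (‖f y‖₊ : ℝ≥0∞) * (‖g y‖₊ : ℝ≥0∞)) (hFm.mul hGm)]
    exact lintegral_mono fun x => ball_holder t hrc _ _ hFm hGm x
  refine step1.trans ?_
  have step2 := outer_holder (μ := (volume : Measure (En n))) q q' hqq'
    _ _ hAm.aemeasurable hBm.aemeasurable
  refine step2.trans_eq ?_
  rfl
end
end
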